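/- For integers k ≥ 2, m ≥ 3 suppose there exists a d-dimensional lattice simplex, not a lattice pyramid, with h*-polynomial 1 + (m−2)t^k + t^{2k}. If the unique element x of height 2k in Λ_Δ has order 2, then d = 4k − 1, and otherwise (order 3, 4, or 6) d = 3k − 1. In particular d ∈ {3k−1, 4k−1}. -/

import Mathlib

noncomputable section

/-- Fractional-part addition on `[0,1)`-vectors, modelling the group `(ℝ/ℤ)^n`. -/
def fadd {n : ℕ} (x y : Fin n → ℝ) : Fin n → ℝ := fun i => Int.fract (x i + y i)

/-- Inverse in `(ℝ/ℤ)^n` on `[0,1)`-representatives. -/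
def fneg {n : ℕ} (x : Fin n → ℝ) : Fin n → ℝ := fun i => Int.fract (-(x i))

/-- `j`-fold sum in `(ℝ/ℤ)^n` on `[0,1)`-representatives. -/
def fsmul {n : ℕ} (j : ℤ) (x : Fin n → ℝ) : Fin n → ℝ := fun i => Int.fract ((j : ℝ) * x i)

/-- The height `ht x = ∑ i, x i` of a `[0,1)`-vector. -/
def ht {n : ℕ} (x : Fin n → ℝ) : ℝ := ∑ i, x i

/-- The support `supp x = {i : x i ≠ 0}`. -/
def supp {n : ℕ} (x : Fin n → ℝ) : Set (Fin n) := {i | x i ≠ 0}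

/-- `S ⊆ [0,1)^n` is a subgroup of `(ℝ/ℤ)^n` (in `[0,1)`-coordinates). -/
def IsSubgroupSet {n : ℕ} (S : Set (Fin n → ℝ)) : Prop :=
  (∀ x ∈ S, ∀ i, x i ∈ Set.Ico (0 : ℝ) 1) ∧ 0 ∈ S ∧
    (∀ x ∈ S, ∀ y ∈ S, fadd x y ∈ S) ∧ ∀ x ∈ S, fneg x ∈ S

/-- The subgroup of `(ℝ/ℤ)^n` generated by a set of `[0,1)`-vectors. -/
def genSet {n : ℕ} (gs : Set (Fin n → ℝ)) : Set (Fin n → ℝ) :=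
  ⋂₀ {S | IsSubgroupSet S ∧ gs ⊆ S}


/-- The group `Λ_Δ` of a lattice simplex with vertices `v 0, …, v d`. -/
def simplexGroup {d : ℕ} (v : Fin (d+1) → Fin d → ℤ) : Set (Fin (d+1) → ℝ) :=
  {x | (∀ i, x i ∈ Set.Ico (0 : ℝ) 1) ∧
    (∀ j : Fin d, ∃ z : ℤ, ∑ i, x i * (v i j : ℝ) = (z : ℝ)) ∧
    (∃ z : ℤ, ∑ i, x i = (z : ℝ))}

lemma my_fract_shift (t : ℝ) (z : ℤ) : Int.fract (t + z) = Int.fract t := Int.fract_add_intCast t z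

lemma my_fract_eq_zero {t : ℝ} (h1 : -1 < t) (h2 : t < 1) (h : Int.fract t = 0) : t = 0 := by
  rcases le_or_gt 0 t with h0 | h0
  · rwa [Int.fract_eq_self.mpr ⟨h0, h2⟩] at h
  · have h3 : Int.fract (t + ((1:ℤ):ℝ)) = t + ((1:ℤ):ℝ) :=
      Int.fract_eq_self.mpr (by push_cast; constructor <;> linarith)
    rw [Int.fract_add_intCast, h] at h3
    push_cast at h3
    linarith

lemma mem_fadd {d : ℕ} {v : Fin (d+1) → Fin d → ℤ} {x y : Fin (d+1) → ℝ}
    (hx : x ∈ simplexGroup v) (hy : y ∈ simplexGroup v) : fadd x y ∈ simplexGroup v := by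
  obtain ⟨hx1, hx2, hx3⟩ := hx
  obtain ⟨hy1, hy2, hy3⟩ := hy
  refine ⟨fun i => ⟨Int.fract_nonneg _, Int.fract_lt_one _⟩, fun j => ?_, ?_⟩
  · obtain ⟨zx, hzx⟩ := hx2 j
    obtain ⟨zy, hzy⟩ := hy2 j
    refine ⟨zx + zy - ∑ i, ⌊x i + y i⌋ * v i j, ?_⟩
    have h1 : ∀ i ∈ Finset.univ, fadd x y i * (v i j : ℝ)
        = (x i * v i j + y i * v i j) - (⌊x i + y i⌋ : ℝ) * v i j := by
      intro i _; simp only [fadd, Int.fract]; ring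
    rw [Finset.sum_congr rfl h1, Finset.sum_sub_distrib, Finset.sum_add_distrib, hzx, hzy]
    push_cast
    ring
  · obtain ⟨zx, hzx⟩ := hx3
    obtain ⟨zy, hzy⟩ := hy3
    refine ⟨zx + zy - ∑ i, ⌊x i + y i⌋, ?_⟩
    have h1 : ∀ i ∈ Finset.univ, fadd x y i = (x i + y i) - (⌊x i + y i⌋ : ℝ) := by
      intro i _; simp only [fadd, Int.fract]
    rw [Finset.sum_congr rfl h1, Finset.sum_sub_distrib, Finset.sum_add_distrib, hzx, hzy]
    push_cast
    ring

lemma mem_fneg {d : ℕ} {v : Fin (d+1) → Fin d → ℤ} {x : Fin (d+1) → ℝ}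
    (hx : x ∈ simplexGroup v) : fneg x ∈ simplexGroup v := by
  obtain ⟨hx1, hx2, hx3⟩ := hx
  refine ⟨fun i => ⟨Int.fract_nonneg _, Int.fract_lt_one _⟩, fun j => ?_, ?_⟩
  · obtain ⟨zx, hzx⟩ := hx2 j
    refine ⟨-zx - ∑ i, ⌊-(x i)⌋ * v i j, ?_⟩
    have h1 : ∀ i ∈ Finset.univ, fneg x i * (v i j : ℝ)
        = -(x i * v i j) - (⌊-(x i)⌋ : ℝ) * v i j := by
      intro i _; simp only [fneg, Int.fract]; ring
    rw [Finset.sum_congr rfl h1, Finset.sum_sub_distrib, Finset.sum_neg_distrib, hzx]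
    push_cast
    ring
  · obtain ⟨zx, hzx⟩ := hx3
    refine ⟨-zx - ∑ i, ⌊-(x i)⌋, ?_⟩
    have h1 : ∀ i ∈ Finset.univ, fneg x i = -(x i) - (⌊-(x i)⌋ : ℝ) := by
      intro i _; simp only [fneg, Int.fract]
    rw [Finset.sum_congr rfl h1, Finset.sum_sub_distrib, Finset.sum_neg_distrib, hzx]
    push_cast
    ring

/-- key pointwise identity -/
lemma my_key_id {a b : ℝ} (ha : a ∈ Set.Ico (0:ℝ) 1) (hb : b ∈ Set.Ico (0:ℝ) 1) :
    b + Int.fract (a - b) = a + (if a < b then 1 else 0) := by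
  obtain ⟨ha0, ha1⟩ := ha; obtain ⟨hb0, hb1⟩ := hb
  rcases le_or_gt b a with h | h
  · rw [Int.fract_eq_self.mpr ⟨by linarith, by linarith⟩, if_neg (not_lt.mpr h)]
    ring
  · have h3 : Int.fract ((a - b) + ((1:ℤ):ℝ)) = (a - b) + ((1:ℤ):ℝ) :=
      Int.fract_eq_self.mpr (by push_cast; constructor <;> linarith)
    rw [Int.fract_add_intCast] at h3
    rw [h3, if_pos h]
    push_cast
    ring

lemma my_fadd_fneg {n : ℕ} (x y : Fin n → ℝ) (i : Fin n) :
    fadd x (fneg y) i = Int.fract (x i - y i) := by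
  have : x i + Int.fract (-(y i)) = (x i - y i) + ((-⌊-(y i)⌋ : ℤ):ℝ) := by
    simp only [Int.fract]; push_cast; ring
  simp only [fadd, fneg, this, Int.fract_add_intCast]

lemma sg_finite {d : ℕ} {v : Fin (d+1) → Fin d → ℤ}
    (hs : AffineIndependent ℝ (fun i => fun j => ((v i j : ℝ)))) :
    (simplexGroup v).Finite := by
  set B : ℤ := ∑ j : Fin d, ∑ i, |v i j| with hB
  set F : (Fin (d+1) → ℝ) → (Fin d → ℤ) × ℤ :=
    fun x => (fun j => ⌊∑ i, x i * (v i j : ℝ)⌋, ⌊∑ i, x i⌋) with hF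
  have hinj : Set.InjOn F (simplexGroup v) := by
    intro a ha b hb hab
    obtain ⟨ha1, ha2, ha3⟩ := ha; obtain ⟨hb1, hb2, hb3⟩ := hb
    have hsum : ∀ j, ∑ i, a i * (v i j : ℝ) = ∑ i, b i * (v i j : ℝ) := by
      intro j
      obtain ⟨za, hza⟩ := ha2 j; obtain ⟨zb, hzb⟩ := hb2 j
      have h := congrFun (congrArg Prod.fst hab) j
      simp only [hF, hza, hzb, Int.floor_intCast] at h
      rw [hza, hzb, h]
    have hsum2 : ∑ i, a i = ∑ i, b i := by
      obtain ⟨za, hza⟩ := ha3; obtain ⟨zb, hzb⟩ := hb3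
      have h := congrArg Prod.snd hab
      simp only [hF, hza, hzb, Int.floor_intCast] at h
      rw [hza, hzb, h]
    have key := affineIndependent_iff.mp hs Finset.univ (fun i => a i - b i)
      (by rw [Finset.sum_sub_distrib, hsum2, sub_self])
      (by
        funext j
        rw [Finset.sum_apply]
        simp only [Pi.smul_apply, smul_eq_mul, Pi.zero_apply, sub_mul]
        rw [Finset.sum_sub_distrib, hsum j, sub_self])
    funext i
    have h := key i (Finset.mem_univ i)
    linarith
  apply Set.Finite.of_finite_image ?_ hinj
  have hsub : F '' simplexGroup v ⊆
      (Set.pi Set.univ fun _ : Fin d => Set.Icc (-B) B) ×ˢ Set.Icc (0:ℤ) (d+1) := by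
    rintro _ ⟨a, ⟨ha1, ha2, ha3⟩, rfl⟩
    constructor
    · intro j _
      obtain ⟨za, hza⟩ := ha2 j
      simp only [hF, hza, Int.floor_intCast]
      have habs : |(za : ℝ)| ≤ (B : ℝ) := by
        rw [← hza]
        calc |∑ i, a i * (v i j : ℝ)| ≤ ∑ i, |a i * (v i j : ℝ)| :=
              Finset.abs_sum_le_sum_abs _ _
          _ ≤ ∑ i, |(v i j : ℝ)| := by
              apply Finset.sum_le_sum
              intro i _
              rw [abs_mul]
              have h1 : |a i| ≤ 1 := by
                rw [abs_of_nonneg (ha1 i).1]; exact (ha1 i).2.le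
              exact mul_le_of_le_one_left (abs_nonneg _) h1
          _ ≤ (B : ℝ) := by
              rw [hB]
              push_cast
              exact Finset.single_le_sum (f := fun j' => ∑ i, |((v i j' : ℤ) : ℝ)|)
                (fun j' _ => Finset.sum_nonneg fun i _ => abs_nonneg _) (Finset.mem_univ j)
      have : |za| ≤ B := by exact_mod_cast habs
      exact Set.mem_Icc.mpr (abs_le.mp this)
    · obtain ⟨za, hza⟩ := ha3
      simp only [hF, hza, Int.floor_intCast]
      have h1 : (0:ℝ) ≤ (za : ℝ) := by rw [← hza]; exact Finset.sum_nonneg fun i _ => (ha1 i).1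
      have h2 : (za : ℝ) ≤ (d+1 : ℝ) := by
        rw [← hza]
        calc ∑ i, a i ≤ ∑ _i : Fin (d+1), (1:ℝ) := Finset.sum_le_sum fun i _ => (ha1 i).2.le
          _ = (d+1 : ℝ) := by simp
      constructor
      · exact_mod_cast h1
      · exact_mod_cast h2
  exact Set.Finite.subset (Set.Finite.prod (Set.Finite.pi fun _ => Set.finite_Icc _ _)
    (Set.finite_Icc _ _)) hsub
theorem stmt15 (k m d : ℕ) (hk : 2 ≤ k) (hm : 3 ≤ m)
    (v : Fin (d+1) → Fin d → ℤ)
    (hsimplex : AffineIndependent ℝ (fun i => fun j => ((v i j : ℝ))))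
    (hnotpyramid : ¬ ∃ i : Fin (d+1), ∀ x ∈ simplexGroup v, x i = 0)
    (hstar : ∀ i : ℕ, {x ∈ simplexGroup v | ht x = (i : ℝ)}.ncard =
      if i = 0 then 1 else if i = k then m - 2 else if i = 2 * k then 1 else 0)
    (x : Fin (d+1) → ℝ) (hx : x ∈ simplexGroup v) (hhtx : ht x = 2 * k)
    (hxuniq : ∀ y ∈ simplexGroup v, ht y = (2 * k : ℝ) → y = x) :
    (fsmul 2 x = 0 → d = 4 * k - 1) ∧ (fsmul 2 x ≠ 0 → d = 3 * k - 1) ∧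
      (d = 3 * k - 1 ∨ d = 4 * k - 1) := by
  have hΛfin := sg_finite hsimplex
  have hkR : (2:ℝ) ≤ (k:ℝ) := by exact_mod_cast hk
  -- height classification
  have htcases : ∀ y ∈ simplexGroup v, ht y = 0 ∨ ht y = (k:ℝ) ∨ ht y = 2*(k:ℝ) := by
    intro y hy
    obtain ⟨z, hz⟩ := hy.2.2
    have hz0 : 0 ≤ z := by
      have h0 : (0:ℝ) ≤ (z:ℝ) := hz ▸ Finset.sum_nonneg fun i _ => (hy.1 i).1
      exact_mod_cast h0
    have hzn : (z:ℝ) = ((z.toNat : ℕ):ℝ) := by exact_mod_cast (Int.toNat_of_nonneg hz0).symm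
    have hhty : ht y = ((z.toNat : ℕ):ℝ) := by rw [ht, hz, hzn]
    by_contra hcon
    push_neg at hcon
    obtain ⟨c0, ck, c2k⟩ := hcon
    set n := z.toNat with hn
    have hn0 : n ≠ 0 := by intro h; apply c0; rw [hhty, h]; norm_num
    have hnk : n ≠ k := by intro h; apply ck; rw [hhty, h]
    have hn2k : n ≠ 2*k := by intro h; apply c2k; rw [hhty, h]; push_cast; ring
    have hcard := hstar n
    rw [if_neg hn0, if_neg hnk, if_neg hn2k] at hcard
    have hfin2 : Set.Finite {x ∈ simplexGroup v | ht x = (n:ℝ)} :=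
      hΛfin.subset fun a ha => ha.1
    have hpos := (Set.ncard_pos hfin2).mpr ⟨y, hy, hhty⟩
    omega
  -- height zero means zero
  have htzero : ∀ y ∈ simplexGroup v, ht y = 0 → y = 0 := by
    intro y hy h0
    rw [ht] at h0
    funext i
    exact (Finset.sum_eq_zero_iff_of_nonneg fun i _ => (hy.1 i).1).mp h0 i (Finset.mem_univ i)
  have hk2k : (k:ℝ) ≠ 2*(k:ℝ) := by intro h; nlinarith
  -- every height-k element is ≤ x
  have hle : ∀ y ∈ simplexGroup v, ht y = (k:ℝ) → ∀ i, y i ≤ x i := by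
    intro y hy hyk
    set w := fadd x (fneg y) with hwdef
    have hw : w ∈ simplexGroup v := mem_fadd hx (mem_fneg hy)
    have hwc : ∀ i, w i = Int.fract (x i - y i) := my_fadd_fneg x y
    have hid : ∀ i, y i + w i = x i + (if x i < y i then 1 else 0) := fun i => by
      rw [hwc i]; exact my_key_id (hx.1 i) (hy.1 i)
    have hwne0 : w ≠ 0 := by
      intro h
      have hxy : ∀ i, x i = y i := by
        intro i
        have h1 : w i = 0 := by rw [h]; rfl
        rw [hwc i] at h1
        have h2 := my_fract_eq_zero
          (by linarith [(hx.1 i).1, (hy.1 i).2]) (by linarith [(hx.1 i).2, (hy.1 i).1]) h1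
        linarith
      have hxyht : ht x = ht y := by
        rw [ht, ht]; exact Finset.sum_congr rfl fun i _ => hxy i
      rw [hhtx, hyk] at hxyht
      exact hk2k hxyht.symm
    have hwnex : w ≠ x := by
      intro h
      have hy0 : y = 0 := by
        funext i
        have h2 := hid i
        rw [congrFun h i] at h2
        by_cases hc : x i < y i
        · rw [if_pos hc] at h2
          have : y i = 1 := by linarith
          linarith [(hy.1 i).2]
        · rw [if_neg hc] at h2
          show y i = 0
          linarith
      rw [hy0] at hyk
      have hz : ht (0 : Fin (d+1) → ℝ) = 0 := by simp [ht]
      rw [hz] at hyk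
      nlinarith [hyk.symm]
    have hwht : ht w = (k:ℝ) := by
      rcases htcases w hw with h | h | h
      · exact absurd (htzero w hw h) hwne0
      · exact h
      · exact absurd (hxuniq w hw h) hwnex
    have hsum : ht y + ht w = ht x + ∑ i, (if x i < y i then (1:ℝ) else 0) := by
      rw [ht, ht, ht, ← Finset.sum_add_distrib, ← Finset.sum_add_distrib]
      exact Finset.sum_congr rfl fun i _ => hid i
    rw [hyk, hwht, hhtx] at hsum
    have hS : ∑ i, (if x i < y i then (1:ℝ) else 0) = 0 := by linarith
    intro i
    have h3 := (Finset.sum_eq_zero_iff_of_nonneg fun i _ => by positivity).mp hS i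
      (Finset.mem_univ i)
    by_contra hc
    push_neg at hc
    rw [if_pos hc] at h3
    norm_num at h3
  -- all coords of x positive
  have hxpos : ∀ i, 0 < x i := by
    intro i
    push_neg at hnotpyramid
    obtain ⟨y, hy, hyi⟩ := hnotpyramid i
    rcases htcases y hy with h | h | h
    · exact absurd (congrFun (htzero y hy h) i) hyi
    · have h1 := hle y hy h i
      have h2 := (hy.1 i).1
      have h3 : 0 < y i := lt_of_le_of_ne h2 (Ne.symm hyi)
      linarith
    · have h4 := hxuniq y hy h
      rw [h4] at hyi
      exact lt_of_le_of_ne (hx.1 i).1 (Ne.symm hyi)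
  have hnegx : fneg x ∈ simplexGroup v := mem_fneg hx
  have hnegc : ∀ i, fneg x i = 1 - x i := by
    intro i
    show Int.fract (-(x i)) = 1 - x i
    have h3 : Int.fract (-(x i) + ((1:ℤ):ℝ)) = Int.fract (-(x i)) := Int.fract_add_intCast _ _
    have h4 : Int.fract (-(x i) + ((1:ℤ):ℝ)) = -(x i) + ((1:ℤ):ℝ) :=
      Int.fract_eq_self.mpr (by push_cast; constructor <;> [linarith [(hx.1 i).2]; linarith [hxpos i]])
    rw [h4] at h3
    rw [← h3]; push_cast; ring
  have hsumd : ht x + ht (fneg x) = ((d:ℝ)+1) := by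
    rw [ht, ht, ← Finset.sum_add_distrib]
    have h1 : ∀ i ∈ Finset.univ, x i + fneg x i = (1:ℝ) := by
      intro i _; rw [hnegc i]; ring
    rw [Finset.sum_congr rfl h1, Finset.sum_const, Finset.card_univ]
    simp
  have hnegne0 : fneg x ≠ 0 := by
    intro h
    have h1 := congrFun h ⟨0, Nat.succ_pos d⟩
    rw [hnegc _] at h1
    have := (hx.1 ⟨0, Nat.succ_pos d⟩).2
    simp only [Pi.zero_apply] at h1
    linarith
  have caseA : fsmul 2 x = 0 → d = 4 * k - 1 := by
    intro h2
    have hhalf : ∀ i, x i = 1/2 := by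
      intro i
      have hfi : Int.fract ((2:ℝ) * x i) = 0 := by
        have := congrFun h2 i
        simp only [fsmul, Pi.zero_apply] at this
        push_cast at this
        exact this
      rcases lt_or_ge (x i) (1/2) with hlt | hge
      · exfalso
        have h3 : Int.fract ((2:ℝ) * x i) = 2 * x i :=
          Int.fract_eq_self.mpr ⟨by linarith [(hx.1 i).1], by linarith⟩
        rw [h3] at hfi
        have := hxpos i
        linarith
      · have h3 : Int.fract ((2*x i - 1) + ((1:ℤ):ℝ)) = Int.fract (2*x i - 1) :=
          Int.fract_add_intCast _ _
        have h4 : Int.fract ((2:ℝ)*x i - 1) = 2*x i - 1 :=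
          Int.fract_eq_self.mpr ⟨by linarith, by linarith [(hx.1 i).2]⟩
        have h5 : (2*x i - 1) + ((1:ℤ):ℝ) = (2:ℝ) * x i := by push_cast; ring
        rw [h5, h4] at h3
        rw [h3] at hfi
        linarith
    have hself : fneg x = x := by
      funext i
      rw [hnegc i, hhalf i]
      norm_num
    rw [hself, hhtx] at hsumd
    have hd : d + 1 = 4 * k := by
      have : ((d:ℝ)+1) = ((4*k : ℕ):ℝ) := by push_cast; linarith
      exact_mod_cast (by exact_mod_cast this : ((d+1 : ℕ):ℝ) = ((4*k:ℕ):ℝ))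
    omega
  have caseB : fsmul 2 x ≠ 0 → d = 3 * k - 1 := by
    intro h2
    have hne : fneg x ≠ x := by
      intro h
      apply h2
      funext i
      have h1 := congrFun h i
      rw [hnegc i] at h1
      have hhalf : x i = 1/2 := by linarith
      show Int.fract (((2:ℤ):ℝ) * x i) = 0
      rw [hhalf]
      norm_num
    have hht : ht (fneg x) = (k:ℝ) := by
      rcases htcases _ hnegx with h | h | h
      · exact absurd (htzero _ hnegx h) hnegne0
      · exact h
      · exact absurd (hxuniq _ hnegx h) hne
    rw [hhtx, hht] at hsumd
    have hd : d + 1 = 3 * k := by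
      have : ((d:ℝ)+1) = ((3*k : ℕ):ℝ) := by push_cast; linarith
      exact_mod_cast (by exact_mod_cast this : ((d+1 : ℕ):ℝ) = ((3*k:ℕ):ℝ))
    omega
  refine ⟨caseA, caseB, ?_⟩
  by_cases h : fsmul 2 x = 0
  · exact Or.inr (caseA h)
  · exact Or.inl (caseB h)
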